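/- Let X_1,...,X_K be formal power series over ℚ in noncommuting variables with zero constant term, and suppose that for each i and each word v of length j with 1 ≤ j ≤ n the denominator of the coefficient of v in X_i divides δ_j(X_i). Then for any word w of length n, the denominator of the coefficient of w in X_1···X_K divides lcm{ δ_{j_1}(X_1)···δ_{j_K}(X_K) : j_i ≥ 1, j_1+...+j_K = n }. -/

import Mathlib

/-- Coefficient of the word `w` in the product `X₁ ⋯ X_K` of formal power series in
noncommuting variables, each series being given by its coefficient function `List A → ℚ`. -/
def prodCoeff {A : Type*} : List (List A → ℚ) → List A → ℚ
  | [], [] => 1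
  | [], _ :: _ => 0
  | X :: Xs, w => ∑ i ∈ Finset.range (w.length + 1),
      X (List.take i w) * prodCoeff Xs (List.drop i w)


lemma den_div_natCast_dvd (z : ℤ) (N : ℕ) : ((z : ℚ) / (N : ℚ)).den ∣ N := by
  have h := Rat.den_dvd z (N : ℤ)
  rw [Rat.divInt_eq_div] at h
  exact_mod_cast h

lemma den_dvd_iff {N : ℕ} (hN : N ≠ 0) {r : ℚ} : r.den ∣ N ↔ ∃ z : ℤ, r = (z : ℚ) / N := by
  constructor
  · rintro ⟨k, hk⟩
    refine ⟨r.num * k, ?_⟩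
    have hkk : k ≠ 0 := fun h => hN (by simp [hk, h])
    have hk0 : (k : ℚ) ≠ 0 := Nat.cast_ne_zero.mpr hkk
    have : (N : ℚ) = (r.den : ℚ) * k := by exact_mod_cast hk
    rw [this]
    push_cast
    rw [mul_div_mul_right _ _ hk0, Rat.num_div_den]
  · rintro ⟨z, rfl⟩; exact den_div_natCast_dvd z N

lemma den_sum_dvd {ι : Type*} (s : Finset ι) (f : ι → ℚ) (N : ℕ)
    (h : ∀ t ∈ s, (f t).den ∣ N) : (∑ t ∈ s, f t).den ∣ N := by
  rcases eq_or_ne N 0 with rfl | hN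
  · exact dvd_zero _
  have h' : ∀ t : ι, ∃ z : ℤ, t ∈ s → f t = (z : ℚ) / N := by
    intro t
    by_cases ht : t ∈ s
    · obtain ⟨z, hz⟩ := (den_dvd_iff hN).mp (h t ht)
      exact ⟨z, fun _ => hz⟩
    · exact ⟨0, fun h => absurd h ht⟩
  choose z hz using h'
  rw [Finset.sum_congr rfl (fun t ht => hz t ht), ← Finset.sum_div]
  have : ∑ t ∈ s, ((z t : ℚ)) = ((∑ t ∈ s, z t : ℤ) : ℚ) := by push_cast; ring
  rw [this]
  exact den_div_natCast_dvd _ _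

lemma mul_lcm_dvd {ι : Type*} {s : Finset ι} (hs : s.Nonempty) (c : ℕ) (g : ι → ℕ) (N : ℕ)
    (h : ∀ j ∈ s, c * g j ∣ N) : c * s.lcm g ∣ N := by
  classical
  induction hs using Finset.Nonempty.cons_induction with
  | singleton a => simpa using h a (Finset.mem_singleton_self a)
  | cons a s ha hs ih =>
    rw [Finset.cons_eq_insert, Finset.lcm_insert]
    have h1 : c * g a ∣ N := h a (Finset.mem_cons_self a s)
    have h2 : c * s.lcm g ∣ N := ih (fun j hj => h j (Finset.mem_cons_of_mem hj))
    have : c * lcm (g a) (s.lcm g) = Nat.lcm (c * g a) (c * s.lcm g) := by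
      rw [Nat.lcm_mul_left]; rfl
    rw [this]
    exact Nat.lcm_dvd h1 h2

lemma prodCoeff_eq_zero {A : Type*} : ∀ (L : List (List A → ℚ)), (∀ X ∈ L, X [] = 0) →
    ∀ w : List A, w.length < L.length → prodCoeff L w = 0
  | [], _, w, hw => absurd hw (by simp)
  | X :: L, h, w, hw => by
    show (∑ i ∈ Finset.range (w.length + 1),
      X (List.take i w) * prodCoeff L (List.drop i w)) = 0
    apply Finset.sum_eq_zero
    intro i hi
    rw [Finset.mem_range] at hi
    rcases Nat.eq_zero_or_pos i with rfl | hi1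
    · simp [h X (by simp)]
    · rw [prodCoeff_eq_zero L (fun Y hY => h Y (List.mem_cons_of_mem _ hY)) _
        (by simp only [List.length_drop]; simp only [List.length_cons] at hw; omega), mul_zero]

lemma aux_main {A : Type*} (n K : ℕ) (X : Fin K → (List A → ℚ)) (δ : Fin K → ℕ → ℕ)
    (hconst : ∀ i : Fin K, X i [] = 0)
    (hδ : ∀ i : Fin K, ∀ v : List A, 1 ≤ v.length → v.length ≤ n →
      (X i v).den ∣ δ i v.length)
    (w : List A) (hw : w.length ≤ n) :
    (prodCoeff (List.ofFn X) w).den ∣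
      ((Finset.Nat.antidiagonalTuple K w.length).filter fun j => ∀ i, 1 ≤ j i).lcm
        fun j => ∏ i, δ i (j i) := by
  induction K generalizing w with
  | zero =>
    cases w with
    | nil => simp [prodCoeff, List.ofFn_zero]
    | cons a t => simp [prodCoeff, List.ofFn_zero]
  | succ K ih =>
    set N := ((Finset.Nat.antidiagonalTuple (K + 1) w.length).filter fun j => ∀ i, 1 ≤ j i).lcm
        (fun j => ∏ i, δ i (j i)) with hNdef
    clear_value N
    have hNle : ∀ x : ℕ, (x ∣ ((Finset.Nat.antidiagonalTuple (K + 1) w.length).filter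
        fun j => ∀ i, 1 ≤ j i).lcm (fun j => ∏ i, δ i (j i))) → x ∣ N := fun x hx => by
      rw [hNdef]; exact hx
    clear hNdef
    rcases eq_or_ne N 0 with hN | hN
    · rw [hN]; exact dvd_zero _
    rw [List.ofFn_succ]
    show (∑ i ∈ Finset.range (w.length + 1),
      X 0 (List.take i w) * prodCoeff (List.ofFn fun j : Fin K => X j.succ) (List.drop i w)).den ∣ N
    apply den_sum_dvd
    intro i hi
    rw [Finset.mem_range] at hi
    rcases Nat.eq_zero_or_pos i with rfl | hipos
    · simp [hconst 0]
    have hiw : i ≤ w.length := by omega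
    have htake : (List.take i w).length = i := by rw [List.length_take]; omega
    have hXden : (X 0 (List.take i w)).den ∣ δ 0 i := by
      have h := hδ 0 (List.take i w) (by omega) (by omega)
      rwa [htake] at h
    by_cases hzero : K = 0 ∧ i < w.length
    · obtain ⟨rfl, hilt⟩ := hzero
      have hne : List.drop i w ≠ [] := by
        intro h
        have := congrArg List.length h
        rw [List.length_drop] at this
        simp at this
        omega
      obtain ⟨a, t, hat⟩ := List.exists_cons_of_ne_nil hne
      rw [List.ofFn_zero, hat]
      have h0 : prodCoeff ([] : List (List A → ℚ)) (a :: t) = 0 := rfl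
      rw [h0, mul_zero]
      simp
    by_cases hsmall : w.length - i < K
    · rw [prodCoeff_eq_zero _ (fun Y hY => by
          obtain ⟨j, hj⟩ := List.mem_ofFn.mp hY
          rw [← hj]; exact hconst j.succ) _
        (by rw [List.length_drop, List.length_ofFn]; omega), mul_zero]
      simp
    · push_neg at hsmall
      set S' := ((Finset.Nat.antidiagonalTuple K (List.drop i w).length).filter
        fun j => ∀ a, 1 ≤ j a) with hS'def
      have hS'ne : S'.Nonempty := by
        rcases Nat.eq_zero_or_pos K with rfl | hK
        · refine ⟨fun _ => 1, ?_⟩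
          rw [hS'def, Finset.mem_filter, Finset.Nat.mem_antidiagonalTuple]
          constructor
          · rw [List.length_drop]
            have him : i = w.length := by
              by_contra hne
              exact hzero ⟨rfl, lt_of_le_of_ne hiw hne⟩
            simp [him]
          · intro a; exact a.elim0
        · obtain ⟨K', rfl⟩ := Nat.exists_eq_succ_of_ne_zero hK.ne'
          refine ⟨Fin.cons (w.length - i - K') (fun _ => 1), ?_⟩
          rw [hS'def, Finset.mem_filter, Finset.Nat.mem_antidiagonalTuple]
          constructor
          · rw [Fin.sum_cons, List.length_drop]
            simp only [Finset.sum_const, Finset.card_univ, Fintype.card_fin, smul_eq_mul, mul_one]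
            omega
          · intro a
            refine Fin.cases ?_ ?_ a
            · rw [Fin.cons_zero]; omega
            · intro b; rw [Fin.cons_succ]
      have hih := ih (fun j => X j.succ) (fun j => δ j.succ)
        (fun j => hconst j.succ) (fun j v h1 h2 => hδ j.succ v h1 h2)
        (List.drop i w) (by rw [List.length_drop]; omega)
      have hsub : δ 0 i * S'.lcm (fun j => ∏ a : Fin K, δ a.succ (j a)) ∣ N := by
        apply mul_lcm_dvd hS'ne
        intro j' hj'
        rw [hS'def, Finset.mem_filter, Finset.Nat.mem_antidiagonalTuple] at hj'
        have hmem : Fin.cons i j' ∈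
            (Finset.Nat.antidiagonalTuple (K + 1) w.length).filter fun j => ∀ a, 1 ≤ j a := by
          rw [Finset.mem_filter, Finset.Nat.mem_antidiagonalTuple]
          constructor
          · rw [Fin.sum_cons, hj'.1, List.length_drop]; exact Nat.add_sub_cancel' hiw
          · intro a
            refine Fin.cases ?_ ?_ a
            · rw [Fin.cons_zero]; exact hipos
            · intro b; rw [Fin.cons_succ]; exact hj'.2 b
        have hdvd := Finset.dvd_lcm (f := fun j : Fin (K + 1) → ℕ => ∏ a, δ a (j a))
          (b := (Fin.cons i j' : Fin (K + 1) → ℕ)) hmem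
        beta_reduce at hdvd
        have hprod : (∏ a : Fin (K + 1), δ a ((Fin.cons i j' : Fin (K + 1) → ℕ) a)) =
            δ 0 i * ∏ a : Fin K, δ a.succ (j' a) := by
          rw [Fin.prod_univ_succ]
          simp only [Fin.cons_zero, Fin.cons_succ]
        rw [hprod] at hdvd
        exact hNle _ hdvd
      calc (X 0 (List.take i w) * prodCoeff (List.ofFn fun j : Fin K => X j.succ)
              (List.drop i w)).den
          ∣ (X 0 (List.take i w)).den *
              (prodCoeff (List.ofFn fun j : Fin K => X j.succ) (List.drop i w)).den :=
            Rat.mul_den_dvd _ _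
        _ ∣ δ 0 i * S'.lcm (fun j => ∏ a : Fin K, δ a.succ (j a)) :=
            mul_dvd_mul hXden hih
        _ ∣ N := hsub

theorem den_coeff_prod_dvd_of_no_const (A : Type*) (K n : ℕ)
    (X : Fin K → (List A → ℚ)) (δ : Fin K → ℕ → ℕ)
    (hconst : ∀ i : Fin K, X i [] = 0)
    (hδ : ∀ i : Fin K, ∀ v : List A, 1 ≤ v.length → v.length ≤ n →
      (X i v).den ∣ δ i v.length)
    (w : List A) (hw : w.length = n) :
    (prodCoeff (List.ofFn X) w).den ∣
      ((Finset.Nat.antidiagonalTuple K n).filter fun j => ∀ i, 1 ≤ j i).lcm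
        fun j => ∏ i, δ i (j i) := by
  subst hw
  exact aux_main w.length K X δ hconst hδ w le_rfl
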